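/- arXiv:1809.08900 — 2 statements merged into one kernel-verified Lean document; each statement's English description precedes it below -/
import Mathlib

section
/- For any nontrivial graphs G and H, edim(G ∨ H) ≥ |V(G)| + |V(H)| - 2, where G ∨ H denotes the join of G and H. -/
open SimpleGraph

variable {V W : Type*}

/-- Distance (in `ℕ∞`) from a vertex to an edge: the minimum of the distances
to the two endpoints. -/
noncomputable def edgeDist (G : SimpleGraph V) (v : V) (e : Sym2 V) : ℕ∞ :=
  Sym2.lift ⟨fun a b => min (G.edist v a) (G.edist v b),
    fun a b => min_comm _ _⟩ e

/-- A set of vertices is an edge metric generator if every pair of distinct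
edges is distinguished by some vertex of the set. -/
def IsEdgeMetricGenerator (G : SimpleGraph V) (S : Set V) : Prop :=
  ∀ e₁ ∈ G.edgeSet, ∀ e₂ ∈ G.edgeSet, e₁ ≠ e₂ →
    ∃ w ∈ S, edgeDist G w e₁ ≠ edgeDist G w e₂

/-- The edge metric dimension: minimum cardinality of an edge metric generator. -/
noncomputable def edim (G : SimpleGraph V) : ℕ :=
  sInf {n | ∃ S : Set V, S.ncard = n ∧ IsEdgeMetricGenerator G S}


/-- The join of two graphs: disjoint union plus all edges across. -/
def joinGraph (G : SimpleGraph V) (H : SimpleGraph W) : SimpleGraph (V ⊕ W) where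
  Adj x y := match x, y with
    | .inl a, .inl b => G.Adj a b
    | .inr a, .inr b => H.Adj a b
    | .inl _, .inr _ => True
    | .inr _, .inl _ => True
  symm := by constructor; rintro (a | a) (b | b) h <;> simp_all [SimpleGraph.adj_comm]
  loopless := by
    constructor; rintro (a | a) h
    · exact G.loopless.irrefl a h
    · exact H.loopless.irrefl a h

/-- A total dominating set: every vertex has a neighbor in the set. -/
def IsTotalDomSet (G : SimpleGraph V) (D : Set V) : Prop :=
  ∀ v : V, ∃ d ∈ D, G.Adj v d

/-- The total domination number. -/
noncomputable def totalDomNum (G : SimpleGraph V) : ℕ :=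
  sInf {n | ∃ D : Set V, D.ncard = n ∧ IsTotalDomSet G D}

/-- The class 𝒢: for every vertex `u` there is a neighbor `v`
such that `{u, v}` is a minimum total dominating set. -/
def InClassG (G : SimpleGraph V) : Prop :=
  ∀ u : V, ∃ v : V, G.Adj u v ∧ IsTotalDomSet G {u, v} ∧
    ({u, v} : Set V).ncard = totalDomNum G

/-- Lexicographic product `G[H]`. -/
def lexProd (G : SimpleGraph V) (H : SimpleGraph W) : SimpleGraph (V × W) where
  Adj x y := G.Adj x.1 y.1 ∨ (x.1 = y.1 ∧ H.Adj x.2 y.2)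
  symm := by constructor; rintro ⟨g, h⟩ ⟨g', h'⟩ (hadj | ⟨rfl, hadj⟩)
             · exact Or.inl hadj.symm
             · exact Or.inr ⟨rfl, hadj.symm⟩
  loopless := by constructor; rintro ⟨g, h⟩ (hadj | ⟨-, hadj⟩)
                 · exact G.loopless.irrefl g hadj
                 · exact H.loopless.irrefl h hadj

/-- Corona product `G ⊙ H`: vertex `(g, none)` is the vertex `g` of `G`, and
`(g, some h)` is the vertex `h` of the copy of `H` attached to `g`. -/
def corona (G : SimpleGraph V) (H : SimpleGraph W) : SimpleGraph (V × Option W) where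
  Adj x y := match x, y with
    | (g, none), (g', none) => G.Adj g g'
    | (g, none), (g', some _) => g = g'
    | (g, some _), (g', none) => g = g'
    | (g, some h), (g', some h') => g = g' ∧ H.Adj h h'
  symm := by constructor; rintro ⟨g, (_ | h)⟩ ⟨g', (_ | h')⟩ hadj <;>
             simp_all [SimpleGraph.adj_comm, eq_comm]
  loopless := by constructor; rintro ⟨g, (_ | h)⟩ hadj <;> simp_all

/-- The closed neighborhood of a vertex. -/
def closedNbhd (G : SimpleGraph V) (u : V) : Set V :=
  insert u (G.neighborSet u)

/-- `u` and `v` are false twins: equal open neighborhoods. -/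
def FalseTwin (G : SimpleGraph V) (u v : V) : Prop :=
  G.neighborSet u = G.neighborSet v

/-- `u` and `v` are true twins: equal closed neighborhoods. -/
def TrueTwin (G : SimpleGraph V) (u v : V) : Prop :=
  closedNbhd G u = closedNbhd G v

/-- The union of the closed neighborhoods of the two endpoints of an edge. -/
def edgeNbhd (G : SimpleGraph V) : Sym2 V → Set V :=
  Sym2.lift ⟨fun a b => closedNbhd G a ∪ closedNbhd G b, fun _ _ => Set.union_comm _ _⟩

/-- Two edges are twin edges: `N[u] ∪ N[v] = N[x] ∪ N[y]`. -/
def TwinEdges (G : SimpleGraph V) (e f : Sym2 V) : Prop :=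
  edgeNbhd G e = edgeNbhd G f

/-- The set of edges lying in nontrivial edge-twin classes. -/
def nontrivTwinEdges (G : SimpleGraph V) : Set (Sym2 V) :=
  {e ∈ G.edgeSet | ∃ f ∈ G.edgeSet, f ≠ e ∧ TwinEdges G e f}

/-- `q(G)`: the number of edges lying in nontrivial edge-twin classes. -/
noncomputable def qval (G : SimpleGraph V) : ℕ := (nontrivTwinEdges G).ncard

/-- `q'(G) = q(G) - m`, where `m` is the number of nontrivial edge-twin classes. -/
noncomputable def q'val (G : SimpleGraph V) : ℕ :=
  qval G - (edgeNbhd G '' nontrivTwinEdges G).ncard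

/-- The set of vertices lying in nontrivial false-twin classes. -/
def nontrivFalseTwins (G : SimpleGraph V) : Set V :=
  {v | ∃ u, u ≠ v ∧ FalseTwin G u v}

/-- The set of vertices lying in nontrivial true-twin classes. -/
def nontrivTrueTwins (G : SimpleGraph V) : Set V :=
  {v | ∃ u, u ≠ v ∧ TrueTwin G u v}

/-- `f'(G) = f(G) - k`: vertices in nontrivial false-twin classes minus the
number of such classes. -/
noncomputable def f'val (G : SimpleGraph V) : ℕ :=
  (nontrivFalseTwins G).ncard - (G.neighborSet '' nontrivFalseTwins G).ncard

/-- `t'(G) = t(G) - ℓ`: vertices in nontrivial true-twin classes minus the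
number of such classes. -/
noncomputable def t'val (G : SimpleGraph V) : ℕ :=
  (nontrivTrueTwins G).ncard - (closedNbhd G '' nontrivTrueTwins G).ncard

/-- A set of representatives for the twin deletion operation: it contains
exactly one vertex from each (false- or true-) twin equivalence class. -/
def IsTwinDeletionSet (G : SimpleGraph V) (R : Set V) : Prop :=
  ∀ v : V, ∃! r : V, r ∈ R ∧ (FalseTwin G v r ∨ TrueTwin G v r)


lemma edgeDist_mk (G : SimpleGraph V) (u c d : V) :
    edgeDist G u s(c, d) = min (G.edist u c) (G.edist u d) := rfl

lemma edist_pos_of_ne' {G : SimpleGraph V} {u v : V} (h : u ≠ v) : 0 < G.edist u v :=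
  pos_iff_ne_zero.mpr fun hh => h (SimpleGraph.edist_eq_zero_iff.mp hh)

lemma edgeDist_ne_zero {G : SimpleGraph V} {u c d : V} (hc : u ≠ c) (hd : u ≠ d) :
    edgeDist G u s(c, d) ≠ 0 := by
  rw [edgeDist_mk]
  exact (lt_min (edist_pos_of_ne' hc) (edist_pos_of_ne' hd)).ne'

lemma univ_isEdgeMetricGenerator (G : SimpleGraph V) :
    IsEdgeMetricGenerator G Set.univ := by
  intro e₁ h₁ e₂ h₂ hne
  induction e₁ using Sym2.ind with
  | _ a b =>
  induction e₂ using Sym2.ind with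
  | _ c d =>
  have hab : a ≠ b := (G.mem_edgeSet.mp h₁).ne
  rcases em (a = c ∨ a = d) with h | h
  · rcases em (b = c ∨ b = d) with h' | h'
    · exfalso
      apply hne
      rw [Sym2.eq_iff]
      rcases h with rfl | rfl <;> rcases h' with rfl | rfl <;> tauto
    · push_neg at h'
      refine ⟨b, Set.mem_univ _, ?_⟩
      have hz : edgeDist G b s(a, b) = 0 := by
        rw [edgeDist_mk]
        simp [G.edist_self]
      rw [hz]
      exact fun hh => edgeDist_ne_zero h'.1 h'.2 hh.symm
  · push_neg at h
    refine ⟨a, Set.mem_univ _, ?_⟩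
    have hz : edgeDist G a s(a, b) = 0 := by
      rw [edgeDist_mk]
      simp [G.edist_self]
    rw [hz]
    exact fun hh => edgeDist_ne_zero h.1 h.2 hh.symm

open Sum Classical in
lemma edgeDist_join_cross (G : SimpleGraph V) (H : SimpleGraph W)
    (s : V ⊕ W) (a : V) (b : W) :
    edgeDist (joinGraph G H) s s(inl a, inr b) =
      if s = inl a ∨ s = inr b then 0 else 1 := by
  rw [edgeDist_mk]
  split_ifs with h
  · rcases h with rfl | rfl <;> simp [SimpleGraph.edist_self]
  · push_neg at h
    cases s with
    | inl v =>
      have h1 : (joinGraph G H).edist (inl v) (inr b) = 1 :=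
        SimpleGraph.edist_eq_one_iff_adj.mpr trivial
      rw [h1, min_eq_right]
      exact ENat.one_le_iff_ne_zero.mpr
        fun hh => h.1 (SimpleGraph.edist_eq_zero_iff.mp hh)
    | inr v =>
      have h1 : (joinGraph G H).edist (inr v) (inl a) = 1 :=
        SimpleGraph.edist_eq_one_iff_adj.mpr trivial
      rw [h1, min_eq_left]
      exact ENat.one_le_iff_ne_zero.mpr
        fun hh => h.2 (SimpleGraph.edist_eq_zero_iff.mp hh)

theorem edim_join_lower_bound {V W : Type*} [Fintype V] [Fintype W]
    (G : SimpleGraph V) (H : SimpleGraph W)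
    (hG : 2 ≤ Fintype.card V) (hH : 2 ≤ Fintype.card W) :
    Fintype.card V + Fintype.card W - 2 ≤ edim (joinGraph G H) := by
  classical
  have hVne : Nonempty V := Fintype.card_pos_iff.mp (by omega)
  have hWne : Nonempty W := Fintype.card_pos_iff.mp (by omega)
  have hne : {n | ∃ S : Set (V ⊕ W), S.ncard = n ∧
      IsEdgeMetricGenerator (joinGraph G H) S}.Nonempty :=
    ⟨(Set.univ : Set (V ⊕ W)).ncard, Set.univ, rfl, univ_isEdgeMetricGenerator _⟩
  obtain ⟨S, hScard, hSgen⟩ := Nat.sInf_mem hne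
  set SV : Set V := Sum.inl ⁻¹' S with hSV
  set SW : Set W := Sum.inr ⁻¹' S with hSW
  -- S misses at most one vertex of V
  have keyV : ∀ a b : V, a ≠ b → Sum.inl a ∈ S ∨ Sum.inl b ∈ S := by
    intro a b hab
    by_contra hcon
    push_neg at hcon
    obtain ⟨w⟩ := hWne
    have he1 : s(Sum.inl a, Sum.inr w) ∈ (joinGraph G H).edgeSet :=
      (joinGraph G H).mem_edgeSet.mpr trivial
    have he2 : s(Sum.inl b, Sum.inr w) ∈ (joinGraph G H).edgeSet :=
      (joinGraph G H).mem_edgeSet.mpr trivial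
    have hne12 : s(Sum.inl a, Sum.inr w) ≠ s(Sum.inl b, Sum.inr w) := by
      simp [Sym2.eq_iff, hab]
    obtain ⟨x, hxS, hx⟩ := hSgen _ he1 _ he2 hne12
    apply hx
    have hxa : x ≠ Sum.inl a := fun h => hcon.1 (h ▸ hxS)
    have hxb : x ≠ Sum.inl b := fun h => hcon.2 (h ▸ hxS)
    rw [edgeDist_join_cross, edgeDist_join_cross]
    simp [hxa, hxb]
  have keyW : ∀ a b : W, a ≠ b → Sum.inr a ∈ S ∨ Sum.inr b ∈ S := by
    intro a b hab
    by_contra hcon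
    push_neg at hcon
    obtain ⟨v⟩ := hVne
    have he1 : s(Sum.inl v, Sum.inr a) ∈ (joinGraph G H).edgeSet :=
      (joinGraph G H).mem_edgeSet.mpr trivial
    have he2 : s(Sum.inl v, Sum.inr b) ∈ (joinGraph G H).edgeSet :=
      (joinGraph G H).mem_edgeSet.mpr trivial
    have hne12 : s(Sum.inl v, Sum.inr a) ≠ s(Sum.inl v, Sum.inr b) := by
      simp [Sym2.eq_iff, hab]
    obtain ⟨x, hxS, hx⟩ := hSgen _ he1 _ he2 hne12
    apply hx
    have hxa : x ≠ Sum.inr a := fun h => hcon.1 (h ▸ hxS)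
    have hxb : x ≠ Sum.inr b := fun h => hcon.2 (h ▸ hxS)
    rw [edgeDist_join_cross, edgeDist_join_cross]
    simp [hxa, hxb]
  have hVc : SVᶜ.ncard ≤ 1 := by
    rw [Set.ncard_le_one_iff (Set.toFinite _)]
    intro a b ha hb
    by_contra hab
    rcases keyV a b hab with h | h
    · exact ha h
    · exact hb h
  have hWc : SWᶜ.ncard ≤ 1 := by
    rw [Set.ncard_le_one_iff (Set.toFinite _)]
    intro a b ha hb
    by_contra hab
    rcases keyW a b hab with h | h
    · exact ha h
    · exact hb h
  have hVcard : SV.ncard + SVᶜ.ncard = Fintype.card V := by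
    rw [Set.ncard_add_ncard_compl SV, Nat.card_eq_fintype_card]
  have hWcard : SW.ncard + SWᶜ.ncard = Fintype.card W := by
    rw [Set.ncard_add_ncard_compl SW, Nat.card_eq_fintype_card]
  have hSdecomp : S = Sum.inl '' SV ∪ Sum.inr '' SW := by
    ext (v | w) <;> simp [hSV, hSW]
  have hSsum : S.ncard = SV.ncard + SW.ncard := by
    rw [hSdecomp, Set.ncard_union_eq (by rw [Set.disjoint_left]; rintro _ ⟨v, -, rfl⟩ ⟨w, -, h⟩; exact Sum.inl_ne_inr h.symm)
      (Set.toFinite _) (Set.toFinite _),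
      Set.ncard_image_of_injective _ Sum.inl_injective,
      Set.ncard_image_of_injective _ Sum.inr_injective]
  have : S.ncard = edim (joinGraph G H) := hScard
  omega
end

section
/- For the complete multipartite graph K_{r_1,...,r_t} with t > 2 parts (each r_i ≥ 1), the edge metric dimension equals (Σ_{i=1}^t r_i) - 1. -/
open SimpleGraph

variable {V W : Type*}

/-- The complete multipartite graph with parts of sizes `r 0, …, r (t-1)`. -/
def completeMultipartiteGraph' {t : ℕ} (r : Fin t → ℕ) :
    SimpleGraph (Σ i : Fin t, Fin (r i)) where
  Adj x y := x.1 ≠ y.1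
  symm := ⟨fun _ _ h => h.symm⟩
  loopless := ⟨fun _ h => h rfl⟩

lemma edgeDist_cmp {t : ℕ} (r : Fin t → ℕ) (w a b : Σ i : Fin t, Fin (r i))
    (hab : a.1 ≠ b.1) :
    edgeDist (completeMultipartiteGraph' r) w s(a, b)
      = if w = a ∨ w = b then 0 else 1 := by
  set G := completeMultipartiteGraph' r with hG
  have hlift : edgeDist G w s(a, b) = min (G.edist w a) (G.edist w b) := rfl
  by_cases hwa : w = a
  · subst hwa
    simp [hlift, SimpleGraph.edist_self]
  by_cases hwb : w = b
  · subst hwb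
    simp [hlift, SimpleGraph.edist_self]
  · rw [hlift, if_neg (by tauto)]
    have ha0 : G.edist w a ≠ 0 := by
      rw [Ne, SimpleGraph.edist_eq_zero_iff]; exact hwa
    have hb0 : G.edist w b ≠ 0 := by
      rw [Ne, SimpleGraph.edist_eq_zero_iff]; exact hwb
    have ha1 : 1 ≤ G.edist w a := ENat.one_le_iff_ne_zero.mpr ha0
    have hb1 : 1 ≤ G.edist w b := ENat.one_le_iff_ne_zero.mpr hb0
    by_cases hpa : w.1 = a.1
    · have hadj : G.Adj w b := by
        show w.1 ≠ b.1
        rw [hpa]; exact hab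
      have : G.edist w b = 1 := SimpleGraph.edist_eq_one_iff_adj.mpr hadj
      rw [this, min_eq_right ha1]
    · have hadj : G.Adj w a := hpa
      have : G.edist w a = 1 := SimpleGraph.edist_eq_one_iff_adj.mpr hadj
      rw [this, min_eq_left hb1]

theorem edim_completeMultipartite {t : ℕ} (ht : 2 < t) (r : Fin t → ℕ)
    (hr : ∀ i, 1 ≤ r i) :
    edim (completeMultipartiteGraph' r) = (∑ i, r i) - 1 := by
  classical
  have hcard : Nat.card (Σ i : Fin t, Fin (r i)) = ∑ i, r i := by
    simp [Nat.card_eq_fintype_card, Fintype.card_sigma]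
  let v₀ : Σ i : Fin t, Fin (r i) := ⟨⟨0, by omega⟩, ⟨0, hr _⟩⟩
  -- upper bound: complement of a single vertex is a generator
  have hgen : IsEdgeMetricGenerator (completeMultipartiteGraph' r)
      ({v₀}ᶜ : Set (Σ i : Fin t, Fin (r i))) := by
    intro e₁ he₁ e₂ he₂ hne
    by_contra hcon
    push_neg at hcon
    have hmem : ∀ w, w ≠ v₀ → (w ∈ e₁ ↔ w ∈ e₂) := by
      intro w hw
      induction e₁ using Sym2.ind with
      | _ a b =>
        induction e₂ using Sym2.ind with
        | _ c d =>
          have hab : a.1 ≠ b.1 := (SimpleGraph.mem_edgeSet _).mp he₁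
          have hcd : c.1 ≠ d.1 := (SimpleGraph.mem_edgeSet _).mp he₂
          have key := hcon w hw
          rw [edgeDist_cmp r w a b hab, edgeDist_cmp r w c d hcd] at key
          simp only [Sym2.mem_iff]
          by_cases h1 : w = a ∨ w = b <;> by_cases h2 : w = c ∨ w = d
          · exact iff_of_true h1 h2
          · rw [if_pos h1, if_neg h2] at key; simp at key
          · rw [if_neg h1, if_pos h2] at key; simp at key
          · exact iff_of_false h1 h2
    by_cases hv1 : v₀ ∈ e₁ <;> by_cases hv2 : v₀ ∈ e₂
    · exact hne (Sym2.ext fun x => by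
        by_cases hx : x = v₀
        · subst hx; exact iff_of_true hv1 hv2
        · exact hmem x hx)
    · -- v₀ ∈ e₁, v₀ ∉ e₂
      induction e₂ using Sym2.ind with
      | _ c d =>
        have hcd : c.1 ≠ d.1 := (SimpleGraph.mem_edgeSet _).mp he₂
        have hcv : c ≠ v₀ := fun h => hv2 (h ▸ Sym2.mem_mk_left c d)
        have hdv : d ≠ v₀ := fun h => hv2 (h ▸ Sym2.mem_mk_right c d)
        have hc1 : c ∈ e₁ := (hmem c hcv).mpr (Sym2.mem_mk_left c d)
        have hd1 : d ∈ e₁ := (hmem d hdv).mpr (Sym2.mem_mk_right c d)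
        induction e₁ using Sym2.ind with
        | _ a b =>
          rw [Sym2.mem_iff] at hv1 hc1 hd1
          rcases hc1 with rfl | rfl <;> rcases hd1 with rfl | rfl <;>
            rcases hv1 with rfl | rfl <;> simp_all
    · -- v₀ ∉ e₁, v₀ ∈ e₂
      induction e₁ using Sym2.ind with
      | _ a b =>
        have hab : a.1 ≠ b.1 := (SimpleGraph.mem_edgeSet _).mp he₁
        have hav : a ≠ v₀ := fun h => hv1 (h ▸ Sym2.mem_mk_left a b)
        have hbv : b ≠ v₀ := fun h => hv1 (h ▸ Sym2.mem_mk_right a b)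
        have ha2 : a ∈ e₂ := (hmem a hav).mp (Sym2.mem_mk_left a b)
        have hb2 : b ∈ e₂ := (hmem b hbv).mp (Sym2.mem_mk_right a b)
        induction e₂ using Sym2.ind with
        | _ c d =>
          rw [Sym2.mem_iff] at hv2 ha2 hb2
          rcases ha2 with rfl | rfl <;> rcases hb2 with rfl | rfl <;>
            rcases hv2 with rfl | rfl <;> simp_all
    · exact hne (Sym2.ext fun x => by
        by_cases hx : x = v₀
        · subst hx; exact iff_of_false hv1 hv2
        · exact hmem x hx)
  have hcompl_card : ({v₀}ᶜ : Set (Σ i : Fin t, Fin (r i))).ncard = (∑ i, r i) - 1 := by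
    have h1 : ({v₀} : Set (Σ i : Fin t, Fin (r i))).ncard
        + ({v₀}ᶜ : Set (Σ i : Fin t, Fin (r i))).ncard = Nat.card (Σ i : Fin t, Fin (r i)) :=
      Set.ncard_add_ncard_compl _
    rw [Set.ncard_singleton, hcard] at h1
    omega
  have hmemA : (∑ i, r i) - 1 ∈ {n | ∃ S : Set (Σ i : Fin t, Fin (r i)),
      S.ncard = n ∧ IsEdgeMetricGenerator (completeMultipartiteGraph' r) S} :=
    ⟨{v₀}ᶜ, hcompl_card, hgen⟩
  have hlow : ∀ n ∈ {n | ∃ S : Set (Σ i : Fin t, Fin (r i)),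
      S.ncard = n ∧ IsEdgeMetricGenerator (completeMultipartiteGraph' r) S},
      (∑ i, r i) - 1 ≤ n := by
    rintro n ⟨S, rfl, hSgen⟩
    by_contra hlt
    push_neg at hlt
    have hco : S.ncard + Sᶜ.ncard = Nat.card (Σ i : Fin t, Fin (r i)) :=
      Set.ncard_add_ncard_compl _
    rw [hcard] at hco
    have h2 : 1 < Sᶜ.ncard := by
      have hsum1 : 1 ≤ ∑ i, r i :=
        le_trans (hr ⟨0, by omega⟩)
          (Finset.single_le_sum (f := r) (fun i _ => Nat.zero_le _) (Finset.mem_univ _))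
      omega
    obtain ⟨u, v, hu, hv, huv⟩ := (Set.one_lt_ncard_iff (Set.toFinite _)).mp h2
    have hex : ∃ k : Fin t, k ≠ u.1 ∧ k ≠ v.1 := by
      by_contra hcon
      push_neg at hcon
      have hsub : (Finset.univ : Finset (Fin t)) ⊆ {u.1, v.1} := by
        intro k _
        by_cases hk : k = u.1
        · simp [hk]
        · simp [hcon k hk]
      have h3 := Finset.card_le_card hsub
      have h4 : ({u.1, v.1} : Finset (Fin t)).card ≤ 2 :=
        le_trans (Finset.card_insert_le _ _) (by simp)
      simp only [Finset.card_univ, Fintype.card_fin] at h3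
      omega
    obtain ⟨k, hk1, hk2⟩ := hex
    set z : Σ i : Fin t, Fin (r i) := ⟨k, ⟨0, hr k⟩⟩ with hz
    have hz1 : u.1 ≠ z.1 := fun h => hk1 h.symm
    have hz2 : v.1 ≠ z.1 := fun h => hk2 h.symm
    have he1 : s(u, z) ∈ (completeMultipartiteGraph' r).edgeSet :=
      (SimpleGraph.mem_edgeSet _).mpr hz1
    have he2 : s(v, z) ∈ (completeMultipartiteGraph' r).edgeSet :=
      (SimpleGraph.mem_edgeSet _).mpr hz2
    have hne : s(u, z) ≠ s(v, z) := fun h => huv (Sym2.congr_left.mp h)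
    obtain ⟨w, hwS, hwd⟩ := hSgen _ he1 _ he2 hne
    apply hwd
    have hwu : w ≠ u := fun h => hu (h ▸ hwS)
    have hwv : w ≠ v := fun h => hv (h ▸ hwS)
    rw [edgeDist_cmp r w u z hz1, edgeDist_cmp r w v z hz2]
    simp [hwu, hwv]
  exact le_antisymm (Nat.sInf_le hmemA) (le_csInf ⟨_, hmemA⟩ hlow)
end
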